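/- Suppose f : ℝ^d → ℝ is differentiable and satisfies ⟨∇f(x), x⟩ ≥ a‖x‖^α - b for all x (with a, b > 0, α ∈ [1,2]) and ‖∇f(x)‖ ≤ M(1+‖x‖^ζ) for all x with 0 < ζ ≤ α/2. Then f(x) ≥ (a/(2α))·‖x‖^α + f(0) - M·((2a+2b)/a)² - b for all x. -/

import Mathlib

private lemma mono_aux {g g' : ℝ → ℝ} {c d : ℝ} (hcd : c ≤ d)
    (hg : ∀ t ∈ Set.Icc c d, HasDerivAt g (g' t) t)
    (hpos : ∀ t ∈ Set.Ioo c d, 0 ≤ g' t) : g c ≤ g d := by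
  have hmono := monotoneOn_of_deriv_nonneg (convex_Icc c d)
    (fun t ht => (hg t ht).continuousAt.continuousWithinAt)
    (fun t ht => by
      rw [interior_Icc] at ht
      exact ((hg t (Set.mem_Icc_of_Ioo ht)).differentiableAt.differentiableWithinAt))
    (fun t ht => by
      rw [interior_Icc] at ht
      rw [(hg t (Set.mem_Icc_of_Ioo ht)).deriv]
      exact hpos t ht)
  exact hmono (Set.left_mem_Icc.2 hcd) (Set.right_mem_Icc.2 hcd) hcd

set_option maxHeartbeats 1000000 in
theorem potential_growth_lower_bound {d : ℕ}
    (f : EuclideanSpace ℝ (Fin d) → ℝ)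
    (f' : EuclideanSpace ℝ (Fin d) → EuclideanSpace ℝ (Fin d))
    (a b M α ζ : ℝ) (ha : 0 < a) (hb : 0 < b) (hM : 0 < M)
    (hα1 : 1 ≤ α) (hα2 : α ≤ 2) (hζ0 : 0 < ζ) (hζ : ζ ≤ α / 2)
    (hgrad : ∀ x, HasGradientAt f (f' x) x)
    (hdis : ∀ x, a * ‖x‖ ^ α - b ≤ (inner ℝ (f' x) x : ℝ))
    (hgrow : ∀ x, ‖f' x‖ ≤ M * (1 + ‖x‖ ^ ζ)) :
    ∀ x, (a / (2 * α)) * ‖x‖ ^ α + f 0 - M * ((2 * a + 2 * b) / a) ^ 2 - b ≤ f x := by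
  intro x
  have hα0 : (0:ℝ) < α := lt_of_lt_of_le one_pos hα1
  set C : ℝ := (2 * a + 2 * b) / a with hC
  set u : ℝ := 2 * b / a with hu
  have hu0 : 0 < u := by positivity
  have hCu : C = 2 + u := by rw [hC, hu]; field_simp
  have hC2 : 2 ≤ C := by rw [hCu]; linarith
  set s : ℝ := u ^ (1/α) with hs
  have hs0 : 0 < s := Real.rpow_pos_of_pos hu0 _
  have hsα : s ^ α = u := by
    rw [hs, ← Real.rpow_mul hu0.le, one_div, inv_mul_cancel₀ (ne_of_gt hα0), Real.rpow_one]
  -- key arithmetic: (1 + s^ζ) * s ≤ C^2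
  have hkey : (1 + s ^ ζ) * s ≤ C ^ 2 := by
    rcases le_or_gt s 1 with h1 | h1
    · have h2 : s ^ ζ ≤ 1 := Real.rpow_le_one hs0.le h1 hζ0.le
      nlinarith
    · have hu1 : 1 ≤ u := by
        rw [← hsα]; exact Real.one_le_rpow h1.le hα0.le
      have h1α : 1 / α ≤ 1 := by
        rw [div_le_one hα0]; linarith
      have hsu : s ≤ u := by
        calc s = u ^ (1/α) := hs
          _ ≤ u ^ (1:ℝ) := Real.rpow_le_rpow_of_exponent_le hu1 h1α
          _ = u := Real.rpow_one u
      have hsζ : s ^ ζ ≤ u := by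
        rw [hs, ← Real.rpow_mul hu0.le]
        calc u ^ (1/α * ζ) ≤ u ^ (1:ℝ) := by
              apply Real.rpow_le_rpow_of_exponent_le hu1
              have hζα : ζ ≤ α := le_trans hζ (by linarith)
              rw [one_div]
              calc α⁻¹ * ζ ≤ α⁻¹ * α :=
                    mul_le_mul_of_nonneg_left hζα (by positivity)
                _ = 1 := inv_mul_cancel₀ (ne_of_gt hα0)
          _ = u := Real.rpow_one u
      rw [hCu]; nlinarith
  set r : ℝ := ‖x‖ with hr
  have hr0 : 0 ≤ r := norm_nonneg x
  rcases eq_or_lt_of_le hr0 with hr0' | hr0'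
  · -- x = 0
    have hx0 : x = 0 := norm_eq_zero.mp hr0'.symm
    have hrα : r ^ α = 0 := by rw [← hr0', Real.zero_rpow (ne_of_gt hα0)]
    rw [hx0, hrα]
    have hMC : 0 ≤ M * C ^ 2 := by positivity
    nlinarith
  -- general setup
  set t₀ : ℝ := min 1 (s / r) with ht₀
  have ht₀0 : 0 < t₀ := lt_min one_pos (by positivity)
  have ht₀1 : t₀ ≤ 1 := min_le_left _ _
  have ht₀r : t₀ * r ≤ s := by
    have h := min_le_right (1:ℝ) (s / r)
    calc t₀ * r ≤ (s / r) * r := by nlinarith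
      _ = s := by field_simp
  -- derivative of t ↦ f (t • x)
  have hφ : ∀ t : ℝ, HasDerivAt (fun t : ℝ => f (t • x)) ((inner ℝ (f' (t • x)) x : ℝ)) t := by
    intro t
    have h1 : HasDerivAt (fun t : ℝ => t • x) x t := by
      simpa using (hasDerivAt_id t).smul_const x
    have h3 := ((hgrad (t • x)).hasFDerivAt).comp_hasDerivAt t h1
    simp only [InnerProductSpace.toDual_apply_apply] at h3
    exact h3
  have hnorm : ∀ t : ℝ, 0 ≤ t → ‖t • x‖ = t * r := by
    intro t ht
    rw [norm_smul, Real.norm_eq_abs, abs_of_nonneg ht, hr]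
  -- Stage 1
  set K : ℝ := M * (1 + s ^ ζ) * r with hK
  have stage1 : f ((0:ℝ) • x) + K * 0 ≤ f (t₀ • x) + K * t₀ := by
    apply mono_aux (g := fun t : ℝ => f (t • x) + K * t)
      (g' := fun t : ℝ => (inner ℝ (f' (t • x)) x : ℝ) + K) ht₀0.le
    · intro t _
      exact (hφ t).add ((hasDerivAt_id t).const_mul K) |>.congr_deriv (by simp)
    · intro t ht
      have ht0 : 0 < t := ht.1
      have htr : t * r ≤ s := by
        have h := ht.2.le
        nlinarith
      have hN := abs_real_inner_le_norm (f' (t • x)) x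
      have h2 : -(‖f' (t • x)‖ * ‖x‖) ≤ (inner ℝ (f' (t • x)) x : ℝ) := by
        have := neg_abs_le ((inner ℝ (f' (t • x)) x : ℝ))
        linarith
      have h4 : ‖t • x‖ ^ ζ ≤ s ^ ζ := by
        rw [hnorm t ht0.le]
        exact Real.rpow_le_rpow (by positivity) htr hζ0.le
      have h5 : ‖f' (t • x)‖ ≤ M * (1 + s ^ ζ) :=
        le_trans (hgrow (t • x)) (by nlinarith)
      have h3 : ‖f' (t • x)‖ * ‖x‖ ≤ K := by
        rw [hK]
        exact mul_le_mul h5 le_rfl (norm_nonneg x) (by positivity)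
      linarith
  rw [zero_smul, mul_zero, add_zero] at stage1
  have hstep : f 0 - M * C ^ 2 ≤ f (t₀ • x) := by
    have h6 : K * t₀ ≤ M * ((1 + s ^ ζ) * s) := by
      rw [hK]
      have h7 : (1 + s ^ ζ) * (t₀ * r) ≤ (1 + s ^ ζ) * s :=
        mul_le_mul_of_nonneg_left ht₀r (by positivity)
      nlinarith
    have h8 : M * ((1 + s ^ ζ) * s) ≤ M * C ^ 2 :=
      mul_le_mul_of_nonneg_left hkey hM.le
    linarith
  -- case split
  rcases le_or_gt r s with hrs | hrs
  · -- small case: t₀ = 1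
    have ht1 : t₀ = 1 := by
      rw [ht₀]
      apply min_eq_left
      rw [le_div_iff₀ hr0']
      linarith
    rw [ht1, one_smul] at hstep
    have hrα : r ^ α ≤ u := by
      rw [← hsα]
      exact Real.rpow_le_rpow hr0 hrs hα0.le
    have hsmall : a / (2 * α) * r ^ α ≤ b := by
      have h7 : a / (2 * α) * r ^ α ≤ a / (2 * α) * u :=
        mul_le_mul_of_nonneg_left hrα (by positivity)
      have h8 : a / (2 * α) * u = b / α := by
        rw [hu]; field_simp
      have h9 : b / α ≤ b := div_le_self hb.le hα1
      linarith
    linarith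
  · -- large case: t₀ = s / r
    have ht0eq : t₀ = s / r := by
      rw [ht₀]
      apply min_eq_right
      rw [div_le_one hr0']; exact hrs.le
    have ht₀rs : t₀ * r = s := by rw [ht0eq]; field_simp
    have stage2 : f (t₀ • x) - a / (2 * α) * r ^ α * t₀ ^ α ≤
        f ((1:ℝ) • x) - a / (2 * α) * r ^ α * (1:ℝ) ^ α := by
      apply mono_aux (g := fun t : ℝ => f (t • x) - a / (2 * α) * r ^ α * t ^ α)
        (g' := fun t : ℝ => (inner ℝ (f' (t • x)) x : ℝ) -
          a / (2 * α) * r ^ α * (α * t ^ (α - 1))) ht₀1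
      · intro t _
        have hpow : HasDerivAt (fun t : ℝ => t ^ α) (α * t ^ (α - 1)) t :=
          Real.hasDerivAt_rpow_const (Or.inr hα1)
        exact (hφ t).sub (hpow.const_mul (a / (2 * α) * r ^ α))
      · intro t ht
        have ht0 : 0 < t := lt_trans ht₀0 ht.1
        have htr : s ≤ t * r := by
          rw [← ht₀rs]
          nlinarith [ht.1]
        have hinner := hdis (t • x)
        rw [hnorm t ht0.le, real_inner_smul_right] at hinner
        have htrα : u ≤ (t * r) ^ α := by
          rw [← hsα]; exact Real.rpow_le_rpow hs0.le htr hα0.le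
        have hb2 : b ≤ a / 2 * ((t * r) ^ α) := by
          have hh := mul_le_mul_of_nonneg_left htrα (le_of_lt (half_pos ha))
          have hub : a / 2 * u = b := by rw [hu]; field_simp
          linarith
        have h10 : a / 2 * ((t * r) ^ α) ≤ t * (inner ℝ (f' (t • x)) x : ℝ) := by
          nlinarith
        have hmulα : (t * r) ^ α = t ^ α * r ^ α := Real.mul_rpow ht0.le hr0
        have htα : t ^ α = t ^ (α - 1) * t := by
          rw [← Real.rpow_add_one (ne_of_gt ht0)]; ring_nf
        have h12 : a / 2 * (t ^ (α - 1) * r ^ α) ≤ (inner ℝ (f' (t • x)) x : ℝ) := by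
          apply le_of_mul_le_mul_right _ ht0
          rw [hmulα, htα] at h10
          nlinarith
        have h13 : a / (2 * α) * r ^ α * (α * t ^ (α - 1)) =
            a / 2 * (t ^ (α - 1) * r ^ α) := by
          field_simp
        simp only [h13]
        linarith
    rw [one_smul, Real.one_rpow, mul_one] at stage2
    have ht₀α : a / (2 * α) * r ^ α * t₀ ^ α ≤ b := by
      have h14 : t₀ ^ α * r ^ α = u := by
        rw [← Real.mul_rpow ht₀0.le hr0, ht₀rs, hsα]
      have h15 : a / (2 * α) * r ^ α * t₀ ^ α = b / α := by
        rw [mul_assoc, mul_comm (r ^ α), h14, hu]; field_simp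
      have h16 : b / α ≤ b := div_le_self hb.le hα1
      linarith
    linarith
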